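/- Let φ : [0,2] → ℝ be twice continuously differentiable and let k ∈ (0,2) be such that φ''(t) < 0 for t ∈ [0,k) and φ''(t) > 0 for t ∈ (k,2]. Let β ∈ (0,1) satisfy φ(2β) − φ(β) = β·φ'(β). Then for every x ∈ [β,1] and every ξ ∈ [0,β], φ(x + β) − φ(x + ξ) − (β − ξ)·φ'(β) ≥ 0. -/

import Mathlib

open Set

theorem stmt15 (φ φ' φ'' : ℝ → ℝ)
    (hd1 : ∀ t ∈ Icc (0:ℝ) 2, HasDerivWithinAt φ (φ' t) (Icc 0 2) t)
    (hd2 : ∀ t ∈ Icc (0:ℝ) 2, HasDerivWithinAt φ' (φ'' t) (Icc 0 2) t)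
    (hc : ContinuousOn φ'' (Icc (0:ℝ) 2))
    (k : ℝ) (hk : k ∈ Ioo (0:ℝ) 2)
    (hconc : ∀ t ∈ Ico (0:ℝ) k, φ'' t < 0)
    (hconv : ∀ t ∈ Ioc k 2, 0 < φ'' t)
    (β : ℝ) (hβ : β ∈ Ioo (0:ℝ) 1)
    (hβeq : φ (2 * β) - φ β = β * φ' β)
    : ∀ x ∈ Icc β 1, ∀ ξ ∈ Icc (0:ℝ) β,
      0 ≤ φ (x + β) - φ (x + ξ) - (β - ξ) * φ' β := by
  obtain ⟨hk0, hk2⟩ := hk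
  obtain ⟨hβ0, hβ1⟩ := hβ
  set H : ℝ → ℝ := fun t => φ t - φ' β * t with hHdef
  have hHd : ∀ t ∈ Icc (0:ℝ) 2, HasDerivWithinAt H (φ' t - φ' β) (Icc 0 2) t := by
    intro t ht
    have h := (hd1 t ht).sub ((hasDerivWithinAt_id t (Icc (0:ℝ) 2)).const_mul (φ' β))
    simp only [mul_one] at h
    exact h
  have hHc : ContinuousOn H (Icc (0:ℝ) 2) := fun t ht => (hHd t ht).continuousWithinAt
  have hφ'c : ContinuousOn φ' (Icc (0:ℝ) 2) := fun t ht => (hd2 t ht).continuousWithinAt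
  have hderivAt : ∀ t ∈ Ioo (0:ℝ) 2, HasDerivAt H (φ' t - φ' β) t := fun t ht =>
    (hHd t (Ioo_subset_Icc_self ht)).hasDerivAt (Icc_mem_nhds ht.1 ht.2)
  have hderiv2At : ∀ t ∈ Ioo (0:ℝ) 2, HasDerivAt φ' (φ'' t) t := fun t ht =>
    (hd2 t (Ioo_subset_Icc_self ht)).hasDerivAt (Icc_mem_nhds ht.1 ht.2)
  -- φ' is strictly antitone on [0,k] and strictly monotone on [k,2]
  have hanti : StrictAntiOn φ' (Icc 0 k) := by
    apply strictAntiOn_of_deriv_neg (convex_Icc _ _)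
      (hφ'c.mono (Icc_subset_Icc le_rfl hk2.le))
    intro x hx
    rw [interior_Icc] at hx
    rw [(hderiv2At x ⟨hx.1, hx.2.trans hk2⟩).deriv]
    exact hconc x ⟨hx.1.le, hx.2⟩
  have hmono : StrictMonoOn φ' (Icc k 2) := by
    apply strictMonoOn_of_deriv_pos (convex_Icc _ _)
      (hφ'c.mono (Icc_subset_Icc hk0.le le_rfl))
    intro x hx
    rw [interior_Icc] at hx
    rw [(hderiv2At x ⟨hk0.trans hx.1, hx.2⟩).deriv]
    exact hconv x ⟨hx.1, hx.2.le⟩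
  have hHeq : H (2*β) = H β := by
    simp only [hHdef]
    linear_combination hβeq
  -- monotonicity helpers for H
  have monoH : ∀ u v : ℝ, 0 ≤ u → v ≤ 2 → u ≤ v →
      (∀ t ∈ Icc u v, φ' β ≤ φ' t) → H u ≤ H v := by
    intro u v hu hv huv hsign
    have hmem : ∀ x ∈ Ioo u v, x ∈ Ioo (0:ℝ) 2 := fun x hx =>
      ⟨lt_of_le_of_lt hu hx.1, lt_of_lt_of_le hx.2 hv⟩
    refine monotoneOn_of_deriv_nonneg (convex_Icc u v)
      (hHc.mono (Icc_subset_Icc hu hv)) ?_ ?_ (left_mem_Icc.2 huv) (right_mem_Icc.2 huv) huv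
    · intro x hx
      rw [interior_Icc] at hx
      exact (hderivAt x (hmem x hx)).differentiableAt.differentiableWithinAt
    · intro x hx
      rw [interior_Icc] at hx
      rw [(hderivAt x (hmem x hx)).deriv]
      have := hsign x ⟨hx.1.le, hx.2.le⟩
      linarith
  have antiH : ∀ u v : ℝ, 0 ≤ u → v ≤ 2 → u ≤ v →
      (∀ t ∈ Icc u v, φ' t ≤ φ' β) → H v ≤ H u := by
    intro u v hu hv huv hsign
    have hmem : ∀ x ∈ Ioo u v, x ∈ Ioo (0:ℝ) 2 := fun x hx =>
      ⟨lt_of_le_of_lt hu hx.1, lt_of_lt_of_le hx.2 hv⟩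
    refine antitoneOn_of_deriv_nonpos (convex_Icc u v)
      (hHc.mono (Icc_subset_Icc hu hv)) ?_ ?_ (left_mem_Icc.2 huv) (right_mem_Icc.2 huv) huv
    · intro x hx
      rw [interior_Icc] at hx
      exact (hderivAt x (hmem x hx)).differentiableAt.differentiableWithinAt
    · intro x hx
      rw [interior_Icc] at hx
      rw [(hderivAt x (hmem x hx)).deriv]
      have := hsign x ⟨hx.1.le, hx.2.le⟩
      linarith
  have santiH : ∀ u v : ℝ, 0 ≤ u → v ≤ 2 → u < v →
      (∀ t ∈ Ioo u v, φ' t < φ' β) → H v < H u := by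
    intro u v hu hv huv hsign
    have hmem : ∀ x ∈ Ioo u v, x ∈ Ioo (0:ℝ) 2 := fun x hx =>
      ⟨lt_of_le_of_lt hu hx.1, lt_of_lt_of_le hx.2 hv⟩
    refine strictAntiOn_of_deriv_neg (convex_Icc u v)
      (hHc.mono (Icc_subset_Icc hu hv)) ?_ (left_mem_Icc.2 huv.le)
      (right_mem_Icc.2 huv.le) huv
    intro x hx
    rw [interior_Icc] at hx
    rw [(hderivAt x (hmem x hx)).deriv]
    have := hsign x hx
    linarith
  have smonoH : ∀ u v : ℝ, 0 ≤ u → v ≤ 2 → u < v →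
      (∀ t ∈ Ioo u v, φ' β < φ' t) → H u < H v := by
    intro u v hu hv huv hsign
    have hmem : ∀ x ∈ Ioo u v, x ∈ Ioo (0:ℝ) 2 := fun x hx =>
      ⟨lt_of_le_of_lt hu hx.1, lt_of_lt_of_le hx.2 hv⟩
    refine strictMonoOn_of_deriv_pos (convex_Icc u v)
      (hHc.mono (Icc_subset_Icc hu hv)) ?_ (left_mem_Icc.2 huv.le)
      (right_mem_Icc.2 huv.le) huv
    intro x hx
    rw [interior_Icc] at hx
    rw [(hderivAt x (hmem x hx)).deriv]
    have := hsign x hx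
    linarith
  have h2β2 : (2:ℝ)*β ≤ 2 := by linarith
  -- β < k
  have hβk : β < k := by
    by_contra h
    push_neg at h
    have hlt : H β < H (2*β) := by
      refine smonoH β (2*β) (by linarith) h2β2 (by linarith) ?_
      intro t ht
      exact hmono ⟨h, by linarith⟩ ⟨h.trans ht.1.le, by linarith [ht.2]⟩ ht.1
    linarith [hHeq]
  -- k < 2β
  have hk2β : k < 2*β := by
    by_contra h
    push_neg at h
    have hlt : H (2*β) < H β := by
      refine santiH β (2*β) (by linarith) h2β2 (by linarith) ?_
      intro t ht
      exact hanti ⟨hβ0.le, hβk.le⟩ ⟨by linarith [ht.1], ht.2.le.trans h⟩ ht.1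
    linarith [hHeq]
  -- φ' β ≤ φ' (2β)
  have hψ2β : φ' β ≤ φ' (2*β) := by
    by_contra h
    push_neg at h
    have hlt : H (2*β) < H β := by
      refine santiH β (2*β) (by linarith) h2β2 (by linarith) ?_
      intro t ht
      rcases le_or_gt t k with htk | htk
      · exact hanti ⟨hβ0.le, hβk.le⟩ ⟨by linarith [ht.1], htk⟩ ht.1
      · calc φ' t ≤ φ' (2*β) :=
              hmono.monotoneOn ⟨htk.le, by linarith [ht.2]⟩ ⟨hk2β.le, h2β2⟩ ht.2.le
          _ < φ' β := h
    linarith [hHeq]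
  -- main argument
  intro x hx ξ hξ
  obtain ⟨hxβ, hx1⟩ := hx
  obtain ⟨hξ0, hξβ⟩ := hξ
  set a := x + ξ with hadef
  set b := x + β with hbdef
  have haβ : β ≤ a := by simp only [hadef]; linarith
  have hab : a ≤ b := by simp only [hadef, hbdef]; linarith
  have hb2 : b ≤ 2 := by simp only [hbdef]; linarith
  have hb2β : 2*β ≤ b := by simp only [hbdef]; linarith
  have key : H a ≤ H b := by
    rcases le_or_gt (φ' a) (φ' β) with h1 | h1
    · -- ψ(a) ≤ 0 : go through β and 2β
      have ha2β : a ≤ 2*β := by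
        by_contra h
        push_neg at h
        have : φ' (2*β) < φ' a :=
          hmono ⟨hk2β.le, h2β2⟩ ⟨by linarith, by linarith⟩ h
        linarith
      have h1' : H a ≤ H β := by
        refine antiH β a (by linarith) (by linarith) haβ ?_
        intro t ht
        rcases le_or_gt t k with htk | htk
        · rcases eq_or_lt_of_le ht.1 with he | hlt
          · rw [← he]
          · exact (hanti ⟨hβ0.le, hβk.le⟩ ⟨by linarith [ht.1], htk⟩ hlt).le
        · calc φ' t ≤ φ' a := hmono.monotoneOn ⟨htk.le, by linarith [ht.2]⟩
                ⟨htk.le.trans ht.2, by linarith⟩ ht.2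
            _ ≤ φ' β := h1
      have h2' : H (2*β) ≤ H b := by
        refine monoH (2*β) b (by linarith) hb2 hb2β ?_
        intro t ht
        calc φ' β ≤ φ' (2*β) := hψ2β
          _ ≤ φ' t := hmono.monotoneOn ⟨hk2β.le, h2β2⟩
              ⟨by linarith [ht.1], ht.2.trans hb2⟩ ht.1
      linarith [hHeq]
    · -- ψ(a) > 0 : then a ≥ k and ψ ≥ 0 on [a,b]
      have hka : k ≤ a := by
        by_contra h
        push_neg at h
        rcases eq_or_lt_of_le haβ with he | hlt
        · rw [← he] at h1; linarith
        · have : φ' a < φ' β := hanti ⟨hβ0.le, hβk.le⟩ ⟨by linarith, h.le⟩ hlt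
          linarith
      refine monoH a b (by linarith) hb2 hab ?_
      intro t ht
      calc φ' β ≤ φ' a := h1.le
        _ ≤ φ' t := hmono.monotoneOn ⟨hka, by linarith [ht.1]⟩
            ⟨hka.trans ht.1, ht.2.trans hb2⟩ ht.1
  have hrw : φ (x + β) - φ (x + ξ) - (β - ξ) * φ' β = H b - H a := by
    simp only [hHdef, hadef, hbdef]; ring
  linarith [key, hrw.le, hrw.ge]
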